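/- arXiv:1404.4150 — 2 statements merged into one kernel-verified Lean document; each statement's English description precedes it below -/
import Mathlib

section
/- Suppose U(x,m,t) = ½x*P(t)x + x*Σ(t,m₁)y + ½y*Γ(t,m₁)y + μ(t,m₁) solves the LQ mean field games master equation. Then matching coefficients of the quadratic forms in x and y forces: (i) dP/dt + PA + A*P − PBR⁻¹B*P + Q + Q̄ = 0, P(T) = Q_T + Q̄_T; (ii) dΣ/dt + Σ(A + Ām₁ − BR⁻¹B*P) + (A* − PBR⁻¹B*)Σ − ΣBR⁻¹B*Σm₁ − Q̄S + PĀ = 0, Σ(T,m₁) = −Q̄_T S_T. In particular, unlike the mean field type control case, Σ(t,m₁) need not be symmetric. -/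
open Matrix

lemma dp_trans {n m : ℕ} (M : Matrix (Fin n) (Fin m) ℝ) (x : Fin n → ℝ) (w : Fin m → ℝ) :
    (Mᵀ.mulVec x) ⬝ᵥ w = x ⬝ᵥ (M.mulVec w) := by
  rw [dotProduct_comm, Matrix.dotProduct_mulVec, Matrix.vecMul_transpose, dotProduct_comm,
    Matrix.dotProduct_mulVec]

lemma dp_trans' {n m : ℕ} (M : Matrix (Fin m) (Fin n) ℝ) (x : Fin n → ℝ) (w : Fin m → ℝ) :
    (M.mulVec x) ⬝ᵥ w = x ⬝ᵥ (Mᵀ.mulVec w) := by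
  rw [← dp_trans, Matrix.transpose_transpose]

lemma quad_trans {n : ℕ} (M : Matrix (Fin n) (Fin n) ℝ) (x : Fin n → ℝ) :
    x ⬝ᵥ Mᵀ.mulVec x = x ⬝ᵥ M.mulVec x := by
  conv_lhs => rw [dotProduct_comm]
  rw [dp_trans]

lemma dp_flip {n : ℕ} (M : Matrix (Fin n) (Fin n) ℝ) (x y : Fin n → ℝ) :
    y ⬝ᵥ M.mulVec x = x ⬝ᵥ Mᵀ.mulVec y := by
  rw [dotProduct_comm, dp_trans']

lemma bilin_ext {n : ℕ} {M N : Matrix (Fin n) (Fin n) ℝ}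
    (h : ∀ x y : Fin n → ℝ, x ⬝ᵥ M.mulVec y = x ⬝ᵥ N.mulVec y) : M = N := by
  ext i j
  have := h (Pi.single i 1) (Pi.single j 1)
  simpa [Matrix.mulVec_single, dotProduct, Pi.single_apply] using this

lemma quad_ext {n : ℕ} {M N : Matrix (Fin n) (Fin n) ℝ} (hM : Mᵀ = M) (hN : Nᵀ = N)
    (h : ∀ x : Fin n → ℝ, x ⬝ᵥ M.mulVec x = x ⬝ᵥ N.mulVec x) : M = N := by
  ext i j
  have h1 := h (Pi.single i 1 + Pi.single j 1)
  have h2 := h (Pi.single i 1)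
  have h3 := h (Pi.single j 1)
  have hMij : M j i = M i j := by conv_lhs => rw [← hM, Matrix.transpose_apply]
  have hNij : N j i = N i j := by conv_lhs => rw [← hN, Matrix.transpose_apply]
  simp [Matrix.mulVec_add, dotProduct_add, add_dotProduct,
    Matrix.mulVec_single, dotProduct, Pi.single_apply, add_mul, ite_mul,
    Finset.sum_add_distrib] at h1 h2 h3
  rw [hMij, hNij] at h1
  linarith

/-- In the LQ mean field games master equation, substituting the ansatz
`U(x,m,t) = ½x*P(t)x + x*Σ(t,m₁)y + ½y*Γ(t,m₁)y + μ(t,m₁)` and matching coefficients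
of the quadratic forms in `x` and `y` forces
(i) the `P`-Riccati equation with `P(T) = Q_T + Q̄_T`, and
(ii) the (nonsymmetric) `Σ`-equation with `Σ(T,m₁) = -Q̄_T S_T`. -/
theorem mfg_master_coefficient_matching (n dd : ℕ)
    (A Ab S ST Q Qb QT QbT a : Matrix (Fin n) (Fin n) ℝ)
    (B : Matrix (Fin n) (Fin dd) ℝ) (R : Matrix (Fin dd) (Fin dd) ℝ) (β T : ℝ)
    (hR : R.PosDef) (hQ : Qᵀ = Q) (hQb : Qbᵀ = Qb) (hQT : QTᵀ = QT) (hQbT : QbTᵀ = QbT)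
    (P P' : ℝ → Matrix (Fin n) (Fin n) ℝ)
    (Sig Sig' Gam Gam' : ℝ → ℝ → Matrix (Fin n) (Fin n) ℝ)
    (mu mu' : ℝ → ℝ → ℝ)
    (hPsymm : ∀ t, (P t)ᵀ = P t) (hP'symm : ∀ t, (P' t)ᵀ = P' t)
    (hGamSymm : ∀ t m1, (Gam t m1)ᵀ = Gam t m1)
    -- P', Σ', Γ', μ' are the time derivatives of P, Σ, Γ, μ
    (hdP : ∀ t (i j : Fin n), HasDerivAt (fun s => P s i j) (P' t i j) t)
    (hdSig : ∀ t m1 (i j : Fin n), HasDerivAt (fun s => Sig s m1 i j) (Sig' t m1 i j) t)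
    (hdGam : ∀ t m1 (i j : Fin n), HasDerivAt (fun s => Gam s m1 i j) (Gam' t m1 i j) t)
    (hdmu : ∀ t m1, HasDerivAt (fun s => mu s m1) (mu' t m1) t)
    -- the master equation identity after substituting the ansatz
    (hmaster : ∀ t m1 (x y : Fin n → ℝ),
      -((1/2) * (x ⬝ᵥ (P' t).mulVec x) + x ⬝ᵥ (Sig' t m1).mulVec y
          + (1/2) * (y ⬝ᵥ (Gam' t m1).mulVec y) + mu' t m1)
        - ((1/2) * (a * P t).trace + (β^2/2) * (P t).trace)
        - (((Sig t m1)ᵀ.mulVec x + (Gam t m1).mulVec y) ⬝ᵥ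
            (A.mulVec y + m1 • (Ab.mulVec y)
              - (B * R⁻¹ * Bᵀ).mulVec ((P t).mulVec y + m1 • ((Sig t m1).mulVec y))))
        - (β^2/2) * (Gam t m1).trace * m1^2 - β^2 * (Sig t m1).trace * m1
      = (1/2) * (x ⬝ᵥ (Q + Qb).mulVec x) - x ⬝ᵥ (Qb * S).mulVec y
        + (1/2) * (y ⬝ᵥ (Sᵀ * Qb * S).mulVec y)
        - (1/2) * (((P t).mulVec x + (Sig t m1).mulVec y) ⬝ᵥ
            (B * R⁻¹ * Bᵀ).mulVec ((P t).mulVec x + (Sig t m1).mulVec y))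
        + ((P t).mulVec x + (Sig t m1).mulVec y) ⬝ᵥ (A.mulVec x + Ab.mulVec y))
    -- the terminal condition identity
    (hterm : ∀ m1 (x y : Fin n → ℝ),
      (1/2) * (x ⬝ᵥ (P T).mulVec x) + x ⬝ᵥ (Sig T m1).mulVec y
          + (1/2) * (y ⬝ᵥ (Gam T m1).mulVec y) + mu T m1
        = (1/2) * (x ⬝ᵥ (QT + QbT).mulVec x) - x ⬝ᵥ (QbT * ST).mulVec y
          + (1/2) * (y ⬝ᵥ (STᵀ * QbT * ST).mulVec y)) :
    (∀ t, P' t = -(P t * A + Aᵀ * P t - P t * B * R⁻¹ * Bᵀ * P t + Q + Qb)) ∧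
    P T = QT + QbT ∧
    (∀ t m1, Sig' t m1
      = -(Sig t m1 * (A + m1 • Ab - B * R⁻¹ * Bᵀ * P t)
          + (Aᵀ - P t * B * R⁻¹ * Bᵀ) * Sig t m1
          - m1 • (Sig t m1 * B * R⁻¹ * Bᵀ * Sig t m1)
          - Qb * S + P t * Ab)) ∧
    (∀ m1, Sig T m1 = -(QbT * ST)) := by
  have hRsymm : Rᵀ = R := by
    have := hR.isHermitian
    simpa [Matrix.IsHermitian, Matrix.conjTranspose_eq_transpose_of_trivial] using this
  have hRinv : (R⁻¹)ᵀ = R⁻¹ := by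
    rw [Matrix.transpose_nonsing_inv, hRsymm]
  refine ⟨?_, ?_, ?_, ?_⟩
  · -- P-Riccati equation
    intro t
    have hNsymm : (-(P t * A + Aᵀ * P t - P t * B * R⁻¹ * Bᵀ * P t + Q + Qb))ᵀ
        = -(P t * A + Aᵀ * P t - P t * B * R⁻¹ * Bᵀ * P t + Q + Qb) := by
      simp only [Matrix.transpose_neg, Matrix.transpose_add, Matrix.transpose_sub,
        Matrix.transpose_mul, Matrix.transpose_transpose, hPsymm, hQ, hQb, hRinv]
      simp only [Matrix.mul_assoc]
      abel
    apply quad_ext (hP'symm t) hNsymm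
    intro x
    have h1 := hmaster t 0 x 0
    have h2 := hmaster t 0 (0 : Fin n → ℝ) 0
    simp only [Matrix.mulVec_zero, dotProduct_zero, zero_dotProduct, smul_zero,
      add_zero, zero_add, sub_zero, mul_zero, zero_mul, zero_smul, zero_pow,
      ne_eq, OfNat.ofNat_ne_zero, not_false_eq_true, Matrix.mulVec_add, Matrix.add_mulVec,
      Matrix.mulVec_smul, dotProduct_add, add_dotProduct, dotProduct_smul,
      smul_eq_mul, dp_trans', Matrix.mulVec_mulVec, Matrix.transpose_transpose,
      hPsymm, Matrix.mul_assoc] at h1 h2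
    have hq : x ⬝ᵥ (Aᵀ * P t).mulVec x = x ⬝ᵥ (P t * A).mulVec x := by
      rw [show Aᵀ * P t = (P t * A)ᵀ by rw [Matrix.transpose_mul, hPsymm], quad_trans]
    simp only [Matrix.neg_mulVec, dotProduct_neg, Matrix.add_mulVec, Matrix.sub_mulVec,
      dotProduct_add, dotProduct_sub, Matrix.mulVec_mulVec, Matrix.mul_assoc]
    rw [hq]
    linear_combination (-2) * h1 + 2 * h2
  · -- terminal condition for P
    have hNsymm : (QT + QbT)ᵀ = QT + QbT := by
      rw [Matrix.transpose_add, hQT, hQbT]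
    apply quad_ext (by rw [hPsymm]) hNsymm
    intro x
    have h1 := hterm 0 x 0
    have h2 := hterm 0 (0 : Fin n → ℝ) 0
    simp only [Matrix.mulVec_zero, dotProduct_zero, zero_dotProduct, add_zero,
      zero_add, mul_zero, zero_mul] at h1 h2
    linear_combination 2 * h1 - 2 * h2
  · -- Σ equation
    intro t m1
    apply bilin_ext
    intro x y
    have hflip : ∀ M : Matrix (Fin n) (Fin n) ℝ, y ⬝ᵥ M.mulVec x = x ⬝ᵥ Mᵀ.mulVec y :=
      fun M => dp_flip M x y
    have h1 := hmaster t m1 x y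
    have h2 := hmaster t m1 x 0
    have h3 := hmaster t m1 (0 : Fin n → ℝ) y
    have h4 := hmaster t m1 (0 : Fin n → ℝ) 0
    simp only [Matrix.mulVec_zero, dotProduct_zero, zero_dotProduct, smul_zero,
      add_zero, zero_add, sub_zero, mul_zero, zero_mul,
      Matrix.mulVec_add, Matrix.add_mulVec, Matrix.mulVec_smul, dotProduct_add, add_dotProduct,
      dotProduct_sub, sub_dotProduct, dotProduct_smul, smul_eq_mul,
      dp_trans', Matrix.mulVec_mulVec, Matrix.transpose_transpose,
      hflip, Matrix.transpose_mul, hPsymm, hGamSymm, hRinv, Matrix.mul_assoc] at h1 h2 h3 h4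
    simp only [Matrix.neg_mulVec, dotProduct_neg, Matrix.add_mulVec, Matrix.sub_mulVec,
      Matrix.smul_mulVec, Matrix.mul_add, Matrix.mul_sub, Matrix.add_mul,
      Matrix.sub_mul, Matrix.mul_smul, Matrix.smul_mul, dotProduct_add, dotProduct_sub,
      dotProduct_smul, smul_eq_mul, Matrix.mulVec_smul, Matrix.mulVec_mulVec,
      Matrix.mul_assoc]
    linear_combination -h1 + h2 + h3 - h4
  · -- terminal condition for Σ
    intro m1
    apply bilin_ext
    intro x y
    have h1 := hterm m1 x y
    have h2 := hterm m1 x 0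
    have h3 := hterm m1 (0 : Fin n → ℝ) y
    have h4 := hterm m1 (0 : Fin n → ℝ) 0
    simp only [Matrix.mulVec_zero, dotProduct_zero, zero_dotProduct, add_zero,
      zero_add, mul_zero, zero_mul] at h1 h2 h3 h4
    simp only [Matrix.neg_mulVec, dotProduct_neg]
    linear_combination h1 - h2 - h3 + h4
end

section
/- Consider the ODE system on [0,T]: dy/dt = (A + Ā − BR⁻¹B*P(t))y − BR⁻¹B*Σ(t)y with y(0) = x̄₀, where Σ(t) solves the Σ-Riccati equation at m₁ = 1. Then r(t) := Σ(t)y(t) satisfies −dr/dt = (A* + Ā* − PBR⁻¹B*)r + (S*Q̄S − Q̄S − S*Q̄ + PĀ + Ā*P)y with r(T) = (S_T*Q̄_T S_T − S_T*Q̄_T − Q̄_T S_T)y(T). -/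
open Matrix

/-- mean field type control, deterministic case: if `y` solves
`dy/dt = (A + Ā - BR⁻¹B*P)y - BR⁻¹B*Σy`, `y(0) = x̄₀`, with `P` solving the
`P`-Riccati equation and `Σ` (symmetric) solving the `Σ`-equation at `m₁ = 1`, then
`r := Σy` satisfies
`-dr/dt = (A* + Ā* - PBR⁻¹B*)r + (S*Q̄S - Q̄S - S*Q̄ + PĀ + Ā*P)y`
with `r(T) = (S_T*Q̄_T S_T - S_T*Q̄_T - Q̄_T S_T)y(T)`. -/
theorem adjoint_r_equation_mftc (n d : ℕ)
    (A Ab S ST Q Qb QT QbT : Matrix (Fin n) (Fin n) ℝ)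
    (B : Matrix (Fin n) (Fin d) ℝ) (R : Matrix (Fin d) (Fin d) ℝ)
    (T : ℝ) (x0bar : Fin n → ℝ)
    (hR : R.PosDef) (hQb : Qbᵀ = Qb) (hQbT : QbTᵀ = QbT)
    (P Sig : ℝ → Matrix (Fin n) (Fin n) ℝ)
    (hPsymm : ∀ t, (P t)ᵀ = P t)
    (hSigSymm : ∀ t, (Sig t)ᵀ = Sig t)
    (hPRic : ∀ t (i j : Fin n), HasDerivAt (fun s => P s i j)
      ((-(P t * A + Aᵀ * P t - P t * B * R⁻¹ * Bᵀ * P t + Q + Qb)) i j) t)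
    (hPT : P T = QT + QbT)
    (hSig : ∀ t (i j : Fin n), HasDerivAt (fun s => Sig s i j)
      ((-(Sig t * (A + Ab - B * R⁻¹ * Bᵀ * P t)
          + (A + Ab - B * R⁻¹ * Bᵀ * P t)ᵀ * Sig t
          - Sig t * B * R⁻¹ * Bᵀ * Sig t
          + Sᵀ * Qb * S - Qb * S - Sᵀ * Qb + P t * Ab + Abᵀ * P t)) i j) t)
    (hSigT : Sig T = STᵀ * QbT * ST - (STᵀ * QbT + QbT * ST))
    (y : ℝ → Fin n → ℝ)
    (hy : ∀ t (i : Fin n), HasDerivAt (fun s => y s i)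
      (((A + Ab - B * R⁻¹ * Bᵀ * P t).mulVec (y t)
        - (B * R⁻¹ * Bᵀ * Sig t).mulVec (y t)) i) t)
    (hy0 : y 0 = x0bar) :
    (∀ t (i : Fin n), HasDerivAt (fun s => (Sig s).mulVec (y s) i)
      ((-((Aᵀ + Abᵀ - P t * B * R⁻¹ * Bᵀ).mulVec ((Sig t).mulVec (y t))
          + (Sᵀ * Qb * S - Qb * S - Sᵀ * Qb + P t * Ab + Abᵀ * P t).mulVec (y t))) i) t) ∧
    (Sig T).mulVec (y T)
      = (STᵀ * QbT * ST - STᵀ * QbT - QbT * ST).mulVec (y T) := by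
  have hRT : Rᵀ = R := hR.1.eq
  have hRinv : (R⁻¹)ᵀ = R⁻¹ := by rw [Matrix.transpose_nonsing_inv, hRT]
  constructor
  · intro t i
    have hderiv : HasDerivAt (fun s => (Sig s).mulVec (y s) i)
        (((-(Sig t * (A + Ab - B * R⁻¹ * Bᵀ * P t)
          + (A + Ab - B * R⁻¹ * Bᵀ * P t)ᵀ * Sig t
          - Sig t * B * R⁻¹ * Bᵀ * Sig t
          + Sᵀ * Qb * S - Qb * S - Sᵀ * Qb + P t * Ab + Abᵀ * P t)).mulVec (y t)
          + (Sig t).mulVec ((A + Ab - B * R⁻¹ * Bᵀ * P t).mulVec (y t)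
            - (B * R⁻¹ * Bᵀ * Sig t).mulVec (y t))) i) t := by
      have h1 := HasDerivAt.fun_sum (fun j (_ : j ∈ Finset.univ) => (hSig t i j).mul (hy t j))
      simpa [Matrix.mulVec, dotProduct, Finset.sum_add_distrib] using h1
    convert hderiv using 1
    have hMT : (A + Ab - B * R⁻¹ * Bᵀ * P t)ᵀ = Aᵀ + Abᵀ - P t * B * R⁻¹ * Bᵀ := by
      simp [Matrix.transpose_add, Matrix.transpose_sub, Matrix.transpose_mul, hPsymm,
        hRinv, Matrix.mul_assoc]
    have key : -(Sig t * (A + Ab - B * R⁻¹ * Bᵀ * P t)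
          + (A + Ab - B * R⁻¹ * Bᵀ * P t)ᵀ * Sig t
          - Sig t * B * R⁻¹ * Bᵀ * Sig t
          + Sᵀ * Qb * S - Qb * S - Sᵀ * Qb + P t * Ab + Abᵀ * P t)
        + (Sig t * (A + Ab - B * R⁻¹ * Bᵀ * P t) - Sig t * (B * R⁻¹ * Bᵀ * Sig t))
        = -((Aᵀ + Abᵀ - P t * B * R⁻¹ * Bᵀ) * Sig t
            + (Sᵀ * Qb * S - Qb * S - Sᵀ * Qb + P t * Ab + Abᵀ * P t)) := by
      rw [hMT]
      simp only [Matrix.mul_add, Matrix.mul_sub, Matrix.add_mul, Matrix.sub_mul,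
        Matrix.mul_assoc, neg_add, neg_sub, sub_eq_add_neg]
      abel
    have hv := congrArg (fun M => M.mulVec (y t)) key
    simp only [Matrix.add_mulVec, Matrix.sub_mulVec, Matrix.neg_mulVec,
      Matrix.mulVec_sub, ← Matrix.mulVec_mulVec] at hv ⊢
    rw [← hv]
  · rw [hSigT]
    congr 1
    rw [sub_add_eq_sub_sub]
end
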